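/- arXiv:1502.02643 — 2 statements merged into one kernel-verified Lean document; each statement's English description precedes it below -/
import Mathlib

section
/- Let y ∈ 𝒴, let y* be an optimal solution of (Prox-DSM) closest to y, and let g* be the optimal value of (Prox-DSM). Then g(y) ≥ g* + (1/(n²r)) ‖y − y*‖²; equivalently, ‖y − y*‖² ≤ n²r ( g(y) − g* ). -/
open scoped RealInnerProductSpace Pointwise

noncomputable section

/-- A set function on the ground set `V = {1,…,n}` (modeled as `Fin n`) is submodular if
`F(A ∩ B) + F(A ∪ B) ≤ F(A) + F(B)` for all `A, B ⊆ V`. -/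
def Submodular {n : ℕ} (F : Finset (Fin n) → ℝ) : Prop :=
  ∀ A B : Finset (Fin n), F (A ∩ B) + F (A ∪ B) ≤ F A + F B

/-- The base polytope `B(F) = {w ∈ ℝⁿ | ∀ A ⊆ V, w(A) ≤ F(A), and w(V) = F(V)}`. -/
def basePolytope (n : ℕ) (F : Finset (Fin n) → ℝ) : Set (EuclideanSpace ℝ (Fin n)) :=
  {w | (∀ A : Finset (Fin n), ∑ i ∈ A, w i ≤ F A) ∧ (∑ i, w i = F Finset.univ)}

/-- `ℝ^{nr}` with the Euclidean norm, written in `r` blocks of `n` coordinates. -/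
abbrev Vec (n r : ℕ) := PiLp 2 (fun _ : Fin r => EuclideanSpace ℝ (Fin n))

/-- The feasible set `𝒴 = ∏ᵢ B(Fᵢ)` of (Prox-DSM). -/
def feas (n r : ℕ) (F : Fin r → Finset (Fin n) → ℝ) : Set (Vec n r) :=
  {y | ∀ i, y i ∈ basePolytope n (F i)}

/-- The objective `g(y) = ‖∑ᵢ y⁽ⁱ⁾‖²` of (Prox-DSM). -/
def g (n r : ℕ) (y : Vec n r) : ℝ := ‖∑ i, y i‖ ^ 2

/-- The `i`-th block of the gradient of `g`: `∇ᵢ g(y) = 2 ∑ⱼ y⁽ʲ⁾` (the same for every `i`). -/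
def gradBlock (n r : ℕ) (y : Vec n r) : EuclideanSpace ℝ (Fin n) := (2 : ℝ) • ∑ j, y j

/-- The full gradient `∇g(y) ∈ ℝ^{nr}`, whose every block equals `2 ∑ⱼ y⁽ʲ⁾`. -/
def gradg (n r : ℕ) (y : Vec n r) : Vec n r := WithLp.toLp 2 (fun _ => gradBlock n r y)

/-- `y` is an optimal solution of (Prox-DSM). -/
def IsOptimal (n r : ℕ) (F : Fin r → Finset (Fin n) → ℝ) (y : Vec n r) : Prop :=
  y ∈ feas n r F ∧ ∀ z ∈ feas n r F, g n r y ≤ g n r z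

/-- The linear map `S = (1/√r)[Iₙ Iₙ ⋯ Iₙ]`, i.e. `S y = (1/√r) ∑ᵢ y⁽ⁱ⁾`. -/
def Smap (n r : ℕ) (y : Vec n r) : EuclideanSpace ℝ (Fin n) := (Real.sqrt r)⁻¹ • ∑ i, y i

/-- Distance between two sets: `d(K₁, K₂) = inf{‖k₁ - k₂‖ : k₁ ∈ K₁, k₂ ∈ K₂}`. -/
def setDist {E : Type*} [PseudoMetricSpace E] (A B : Set E) : ℝ :=
  sInf ((fun p : E × E => dist p.1 p.2) '' (A ×ˢ B))

namespace St12

attribute [local instance] Classical.propDecidable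

variable {n : ℕ}

/-- x is tight on T -/
def Tight (G : Finset (Fin n) → ℝ) (x : EuclideanSpace ℝ (Fin n)) (T : Finset (Fin n)) : Prop :=
  ∑ u ∈ T, x u = G T

lemma tight_univ {G : Finset (Fin n) → ℝ} {x : EuclideanSpace ℝ (Fin n)}
    (hx : x ∈ basePolytope n G) : Tight G x Finset.univ := hx.2

lemma tight_empty {G : Finset (Fin n) → ℝ} (hG0 : G ∅ = 0) (x : EuclideanSpace ℝ (Fin n)) :
    Tight G x ∅ := by simp [Tight, hG0]

lemma tight_inter {G : Finset (Fin n) → ℝ} (hG : Submodular G) {x : EuclideanSpace ℝ (Fin n)}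
    (hx : x ∈ basePolytope n G) {A B : Finset (Fin n)}
    (hA : Tight G x A) (hB : Tight G x B) : Tight G x (A ∩ B) := by
  have hsum : ∑ u ∈ A ∪ B, x u + ∑ u ∈ A ∩ B, x u = ∑ u ∈ A, x u + ∑ u ∈ B, x u :=
    Finset.sum_union_inter
  have h1 := hx.1 (A ∩ B)
  have h2 := hx.1 (A ∪ B)
  have h3 := hG A B
  unfold Tight at *
  linarith

lemma tight_union {G : Finset (Fin n) → ℝ} (hG : Submodular G) {x : EuclideanSpace ℝ (Fin n)}
    (hx : x ∈ basePolytope n G) {A B : Finset (Fin n)}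
    (hA : Tight G x A) (hB : Tight G x B) : Tight G x (A ∪ B) := by
  have hsum : ∑ u ∈ A ∪ B, x u + ∑ u ∈ A ∩ B, x u = ∑ u ∈ A, x u + ∑ u ∈ B, x u :=
    Finset.sum_union_inter
  have h1 := hx.1 (A ∩ B)
  have h2 := hx.1 (A ∪ B)
  have h3 := hG A B
  unfold Tight at *
  linarith

/-- the minimal tight set containing b -/
def minTight (G : Finset (Fin n) → ℝ) (x : EuclideanSpace ℝ (Fin n)) (b : Fin n) :
    Finset (Fin n) :=
  (Finset.univ.powerset.filter (fun T => Tight G x T ∧ b ∈ T)).inf id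

lemma mem_finsetInf {α : Type*} [Fintype α] [DecidableEq α]
    {s : Finset (Finset α)} {a : α} : a ∈ s.inf id ↔ ∀ T ∈ s, a ∈ T := by
  classical
  induction s using Finset.induction_on with
  | empty => simp [Finset.inf_empty]
  | @insert a s' ha ih =>
    rw [Finset.inf_insert]
    simp_all [Finset.mem_inter]

lemma tight_finsetInf {G : Finset (Fin n) → ℝ} (hG : Submodular G)
    {x : EuclideanSpace ℝ (Fin n)} (hx : x ∈ basePolytope n G)
    {s : Finset (Finset (Fin n))} (hs : ∀ T ∈ s, Tight G x T) : Tight G x (s.inf id) := by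
  classical
  induction s using Finset.induction_on with
  | empty =>
    simpa [Finset.inf_empty, Finset.top_eq_univ] using tight_univ hx
  | @insert a s' ha ih =>
    rw [Finset.inf_insert]
    exact tight_inter hG hx (hs a (Finset.mem_insert_self a s'))
      (ih (fun T hT => hs T (Finset.mem_insert_of_mem hT)))

lemma mem_minTight {G : Finset (Fin n) → ℝ} (x : EuclideanSpace ℝ (Fin n)) (b : Fin n) :
    b ∈ minTight G x b := by
  rw [minTight, mem_finsetInf]
  intro T hT
  exact (Finset.mem_filter.1 hT).2.2

lemma tight_minTight {G : Finset (Fin n) → ℝ} (hG : Submodular G)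
    {x : EuclideanSpace ℝ (Fin n)} (hx : x ∈ basePolytope n G) (b : Fin n) :
    Tight G x (minTight G x b) := by
  apply tight_finsetInf hG hx
  intro T hT
  exact (Finset.mem_filter.1 hT).2.1

lemma minTight_subset {G : Finset (Fin n) → ℝ} {x : EuclideanSpace ℝ (Fin n)} {b : Fin n}
    {T : Finset (Fin n)} (hT : Tight G x T) (hb : b ∈ T) : minTight G x b ⊆ T := by
  have : T ∈ Finset.univ.powerset.filter (fun T => Tight G x T ∧ b ∈ T) := by
    simp [Finset.mem_filter, hT, hb]
  have h2 : (Finset.univ.powerset.filter (fun T => Tight G x T ∧ b ∈ T)).inf id ≤ id T :=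
    Finset.inf_le this
  exact h2

lemma tight_finsetSup {G : Finset (Fin n) → ℝ} (hG : Submodular G) (hG0 : G ∅ = 0)
    {x : EuclideanSpace ℝ (Fin n)} (hx : x ∈ basePolytope n G)
    {s : Finset (Fin n)} {f : Fin n → Finset (Fin n)}
    (hs : ∀ u ∈ s, Tight G x (f u)) : Tight G x (s.sup f) := by
  classical
  induction s using Finset.induction_on with
  | empty => simpa [Finset.sup_empty, Finset.bot_eq_empty] using tight_empty hG0 x
  | @insert a s' ha ih =>
    rw [Finset.sup_insert]
    exact tight_union hG hx (hs a (Finset.mem_insert_self a s'))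
      (ih (fun u hu => hs u (Finset.mem_insert_of_mem hu)))


/-! ### Chains -/

variable {r : ℕ}

def agg (z : Vec n r) (u : Fin n) : ℝ := ∑ i, z i u

def Arc (F : Fin r → Finset (Fin n) → ℝ) (z : Vec n r) (a b : Fin n) : Prop :=
  a ≠ b ∧ ∃ i, a ∈ minTight (F i) (z i) b

def ChainP (F : Fin r → Finset (Fin n) → ℝ) (z : Vec n r) (t : Fin n → ℝ) (v : Fin n) : Prop :=
  ∃ l : List (Fin n), List.Chain (Arc F z) v l ∧ (v :: l).Nodup ∧
    agg z ((v :: l).getLast (List.cons_ne_nil v l)) < t ((v :: l).getLast (List.cons_ne_nil v l))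

lemma chain_suffix {α : Type*} {R : α → α → Prop} :
    ∀ {l : List α} {x a : α}, List.Chain R x l → a ∈ x :: l →
      ∃ l', List.Chain R a l' ∧ (a :: l') <:+ (x :: l) := by
  intro l
  induction l with
  | nil =>
    intro x a _ ha
    simp only [List.mem_singleton] at ha
    subst ha
    exact ⟨[], List.Chain.nil, List.suffix_refl _⟩
  | cons b rest ih =>
    intro x a hch ha
    rcases List.mem_cons.1 ha with h1 | h2
    · subst h1
      exact ⟨b :: rest, hch, List.suffix_refl _⟩
    · rcases List.chain_cons.1 hch with ⟨_, hch'⟩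
      obtain ⟨l', hcl', hsuf⟩ := ih hch' h2
      exact ⟨l', hcl', hsuf.trans (List.suffix_cons x (b :: rest))⟩

lemma getLast_of_suffix {α : Type*} : ∀ {l₁ l₂ : List α} (_ : l₁ <:+ l₂)
    (h1 : l₁ ≠ []) (h2 : l₂ ≠ []), l₂.getLast h2 = l₁.getLast h1 := by
  intro l₁ l₂ h h1 h2
  obtain ⟨p, rfl⟩ := h
  exact List.getLast_append_of_right_ne_nil p l₁ h1

lemma chainP_of_arc {F : Fin r → Finset (Fin n) → ℝ} {z : Vec n r} {t : Fin n → ℝ}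
    {a b : Fin n} (hb : ChainP F z t b) (hab : Arc F z a b) : ChainP F z t a := by
  obtain ⟨l, hch, hnd, hlast⟩ := hb
  by_cases hmem : a ∈ b :: l
  · obtain ⟨l', hcl', hsuf⟩ := chain_suffix hch hmem
    refine ⟨l', hcl', hsuf.sublist.nodup hnd, ?_⟩
    have := getLast_of_suffix hsuf (List.cons_ne_nil a l') (List.cons_ne_nil b l)
    rw [← this]
    exact hlast
  · refine ⟨b :: l, List.chain_cons.2 ⟨hab, hch⟩, ?_, ?_⟩
    · exact List.nodup_cons.2 ⟨hmem, hnd⟩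
    · have : (a :: b :: l).getLast (List.cons_ne_nil _ _)
          = (b :: l).getLast (List.cons_ne_nil _ _) := List.getLast_cons _
      rw [this]
      exact hlast

lemma exists_excess_chain {F : Fin r → Finset (Fin n) → ℝ}
    (hsub : ∀ i, Submodular (F i)) (hnorm : ∀ i, F i ∅ = 0) {z : Vec n r}
    (hz : z ∈ feas n r F) {t : Fin n → ℝ}
    (ht : ∀ T : Finset (Fin n), ∑ u ∈ T, t u ≤ ∑ i, F i T)
    {u₀ : Fin n} (hu₀ : agg z u₀ < t u₀) :
    ∃ v, t v < agg z v ∧ ChainP F z t v := by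
  by_contra hcon
  push_neg at hcon
  set W : Finset (Fin n) := Finset.univ.filter (ChainP F z t) with hW
  have hu₀W : u₀ ∈ W := by
    refine Finset.mem_filter.2 ⟨Finset.mem_univ _, ⟨[], List.Chain.nil, ?_, ?_⟩⟩
    · simp
    · simpa using hu₀
  have htight : ∀ i, Tight (F i) (z i) W := by
    intro i
    have hWsup : W = W.sup (fun u => minTight (F i) (z i) u) := by
      apply Finset.Subset.antisymm
      · intro u hu
        have h1 : minTight (F i) (z i) u ≤ W.sup (fun u => minTight (F i) (z i) u) :=
          Finset.le_sup hu
        exact h1 (mem_minTight (z i) u)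
      · intro a ha
        obtain ⟨u, huW, ha'⟩ := Finset.mem_sup.1 ha
        by_cases hau : a = u
        · subst hau; exact huW
        · have harc : Arc F z a u := ⟨hau, ⟨i, ha'⟩⟩
          have hu' : ChainP F z t u := (Finset.mem_filter.1 huW).2
          exact Finset.mem_filter.2 ⟨Finset.mem_univ _, chainP_of_arc hu' harc⟩
    rw [hWsup]
    exact tight_finsetSup (hsub i) (hnorm i) (hz i)
      (fun u _ => tight_minTight (hsub i) (hz i) u)
  have hsum1 : ∑ u ∈ W, t u ≤ ∑ i, F i W := ht W
  have hsum2 : (∑ i, F i W) = ∑ u ∈ W, agg z u := by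
    have h1 : (∑ i, F i W) = ∑ i, ∑ u ∈ W, z i u := by
      apply Finset.sum_congr rfl
      intro i _
      exact (htight i).symm
    rw [h1, Finset.sum_comm]
    rfl
  have hsum3 : ∑ u ∈ W, agg z u < ∑ u ∈ W, t u := by
    apply Finset.sum_lt_sum
    · intro u huW
      have hcp : ChainP F z t u := (Finset.mem_filter.1 huW).2
      by_contra hlt
      push_neg at hlt
      exact hcon u hlt hcp
    · exact ⟨u₀, hu₀W, hu₀⟩
  rw [hsum2] at hsum1
  linarith


/-! ### Move construction -/

lemma ite_pair_split {v b : Fin n} (hvb : v ≠ b) (X Y : ℝ) (q : Fin n) :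
    (if q = b then X else if q = v then Y else 0)
      = (if q = b then X else 0) + (if q = v then Y else 0) := by
  by_cases h1 : q = b
  · subst h1
    simp [Ne.symm hvb]
  · simp [h1]

lemma move_exists {F : Fin r → Finset (Fin n) → ℝ} (z : Vec n r) :
    ∀ (l : List (Fin n)) (v : Fin n), List.Chain (Arc F z) v l → (v :: l).Nodup →
    ∃ N : Vec n r,
      (∀ q, q ∉ v :: l → ∀ j, N j q = 0) ∧
      (∀ j, N j v = 0 ∨ N j v = -1) ∧
      (∑ j, ∑ q, (N j q)^2 ≤ 2 * (l.length : ℝ)) ∧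
      (∀ u, ∑ j, N j u = (if u = (v :: l).getLast (List.cons_ne_nil v l) then 1 else 0)
            - (if u = v then 1 else 0)) ∧
      (∀ j (T : Finset (Fin n)), Tight (F j) (z j) T → ∑ u ∈ T, N j u ≤ 0) ∧
      (∀ j q, |N j q| ≤ 1) ∧
      (∀ j, ∑ q, N j q = 0) := by
  intro l
  induction l with
  | nil =>
    intro v _ _
    refine ⟨(0 : Vec n r), ?_, ?_, ?_, ?_, ?_, ?_, ?_⟩
    · intro q _ j; rfl
    · intro j; left; rfl
    · simp
    · intro u; simp; by_cases h : u = v <;> simp [h]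
    · intro j T _; simp
    · intro j q; simp
    · intro j; simp
  | cons b rest ih =>
    intro v hch hnd
    obtain ⟨harc, hch'⟩ := List.chain_cons.1 hch
    obtain ⟨hvb, i, hvmem⟩ := harc
    have hnd' : (b :: rest).Nodup := hnd.of_cons
    have hvnot : v ∉ b :: rest := (List.nodup_cons.1 hnd).1
    obtain ⟨N', hi1, hi2, hi3, hi4, hi5, hi6, hi7⟩ := ih b hch' hnd'
    set E : Vec n r := WithLp.toLp 2 (fun j => WithLp.toLp 2 (fun q => if j = i then (if q = b then (1:ℝ) else if q = v then -1 else 0) else 0)) with hE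
    have hEapp : ∀ j q, E j q = if j = i then (if q = b then (1:ℝ) else if q = v then -1 else 0) else 0 := fun j q => rfl
    refine ⟨E + N', ?_, ?_, ?_, ?_, ?_, ?_, ?_⟩
    · -- (i) support
      intro q hq j
      have hqb : q ≠ b := by intro h; exact hq (by simp [h])
      have hqv : q ≠ v := by intro h; exact hq (by simp [h])
      have h1 : N' j q = 0 := hi1 q (by intro h; exact hq (List.mem_cons_of_mem _ h)) j
      show E j q + N' j q = 0
      rw [hEapp, h1, if_neg hqb, if_neg hqv, add_zero, ite_self]
    · -- (ii) head values
      intro j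
      have h1 : N' j v = 0 := hi1 v hvnot j
      show E j v + N' j v = 0 ∨ E j v + N' j v = -1
      rw [hEapp, h1, add_zero]
      by_cases hji : j = i
      · right
        rw [if_pos hji, if_neg (fun h => hvb h), if_pos rfl]
      · left
        rw [if_neg hji]
    · -- (iii) squared norm
      have happ : ∀ j q, ((E + N') j q)^2 = (E j q)^2 + 2*(E j q)*(N' j q) + (N' j q)^2 := by
        intro j q
        show (E j q + N' j q)^2 = _
        ring
      have hsplitq : ∀ (X Y : ℝ), ∑ q, (if q = b then X else if q = v then Y else 0) = X + Y := by
        intro X Y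
        rw [Finset.sum_congr rfl (fun q _ => ite_pair_split hvb X Y q), Finset.sum_add_distrib]
        simp [Finset.sum_ite_eq']
      have hEsq : ∀ j, ∑ q, (E j q)^2 = if j = i then 2 else 0 := by
        intro j
        by_cases hji : j = i
        · have hthis : ∀ q, (E j q)^2 = if q = b then (1:ℝ) else if q = v then 1 else 0 := by
            intro q
            rw [hEapp, if_pos hji]
            by_cases h1 : q = b
            · rw [if_pos h1, if_pos h1]; norm_num
            · rw [if_neg h1, if_neg h1]
              by_cases h2 : q = v
              · rw [if_pos h2, if_pos h2]; norm_num
              · rw [if_neg h2, if_neg h2]; norm_num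
          rw [if_pos hji, Finset.sum_congr rfl (fun q _ => hthis q), hsplitq]
          norm_num
        · have hthis : ∀ q, (E j q)^2 = 0 := by
            intro q
            rw [hEapp, if_neg hji]
            norm_num
          rw [if_neg hji, Finset.sum_congr rfl (fun q _ => hthis q), Finset.sum_const_zero]
      have hcross : ∀ j, ∑ q, (E j q) * (N' j q) = if j = i then N' i b - N' i v else 0 := by
        intro j
        by_cases hji : j = i
        · rw [if_pos hji, hji]
          have hthis : ∀ q, (E i q) * (N' i q) = if q = b then N' i b else if q = v then -(N' i v) else 0 := by
            intro q
            rw [hEapp, if_pos rfl]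
            by_cases h1 : q = b
            · rw [if_pos h1, if_pos h1, h1, one_mul]
            · rw [if_neg h1, if_neg h1]
              by_cases h2 : q = v
              · rw [if_pos h2, if_pos h2, h2]
                ring
              · rw [if_neg h2, if_neg h2, zero_mul]
          rw [Finset.sum_congr rfl (fun q _ => hthis q), hsplitq]
          ring
        · rw [if_neg hji]
          have hthis : ∀ q, (E j q) * (N' j q) = 0 := by
            intro q
            rw [hEapp, if_neg hji, zero_mul]
          simp [Finset.sum_congr rfl (fun q _ => hthis q)]
      have hNiv : N' i v = 0 := hi1 v hvnot i
      have hNib : N' i b = 0 ∨ N' i b = -1 := hi2 i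
      calc ∑ j, ∑ q, ((E + N') j q)^2
          = ∑ j, ∑ q, ((E j q)^2 + 2*(E j q)*(N' j q) + (N' j q)^2) := by
            exact Finset.sum_congr rfl (fun j _ => Finset.sum_congr rfl (fun q _ => happ j q))
        _ = (∑ j, ∑ q, (E j q)^2) + 2 * (∑ j, ∑ q, (E j q)*(N' j q)) + ∑ j, ∑ q, (N' j q)^2 := by
            rw [Finset.mul_sum]
            rw [← Finset.sum_add_distrib, ← Finset.sum_add_distrib]
            apply Finset.sum_congr rfl
            intro j _
            rw [Finset.mul_sum]
            rw [← Finset.sum_add_distrib, ← Finset.sum_add_distrib]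
            apply Finset.sum_congr rfl
            intro q _
            ring
        _ ≤ 2 + 0 + 2 * (rest.length : ℝ) := by
            have e1 : (∑ j, ∑ q, (E j q)^2) = 2 := by
              rw [Finset.sum_congr rfl (fun j _ => hEsq j)]
              simp [Finset.sum_ite_eq']
            have e2 : (∑ j, ∑ q, (E j q)*(N' j q)) ≤ 0 := by
              rw [Finset.sum_congr rfl (fun j _ => hcross j)]
              rw [Finset.sum_ite_eq' Finset.univ i (fun _ => N' i b - N' i v)]
              rcases hNib with h | h <;> simp [h, hNiv]
            have e3 := hi3
            nlinarith
        _ = 2 * ((b :: rest).length : ℝ) := by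
            simp [List.length_cons]
            ring
    · -- (iv) row sums
      intro u
      have hrowE : ∑ j, E j u = if u = b then (1:ℝ) else if u = v then -1 else 0 := by
        have : ∀ j, E j u = if j = i then (if u = b then (1:ℝ) else if u = v then -1 else 0) else 0 :=
          fun j => rfl
        rw [Finset.sum_congr rfl (fun j _ => this j)]
        simp [Finset.sum_ite_eq']
      have hsum : ∑ j, (E + N') j u = (∑ j, E j u) + ∑ j, N' j u := by
        rw [← Finset.sum_add_distrib]
        rfl
      rw [hsum, hrowE, hi4 u]
      have hlast : ((v :: b :: rest).getLast (List.cons_ne_nil _ _))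
          = ((b :: rest).getLast (List.cons_ne_nil _ _)) := List.getLast_cons _
      rw [hlast]
      set L := (b :: rest).getLast (List.cons_ne_nil _ _) with hL
      by_cases h1 : u = b <;> by_cases h2 : u = v
      · exact ((hvb (by rw [← h2, h1])).elim)
      · simp [h1, h2, Ne.symm hvb]
      · simp [h1, h2, hvb]
        ring
      · simp [h1, h2]
    · -- (v) tight sets
      intro j T hT
      have hsum : ∑ u ∈ T, (E + N') j u = (∑ u ∈ T, E j u) + ∑ u ∈ T, N' j u := by
        rw [← Finset.sum_add_distrib]
        rfl
      rw [hsum]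
      have h2 : ∑ u ∈ T, N' j u ≤ 0 := hi5 j T hT
      have h1 : ∑ u ∈ T, E j u ≤ 0 := by
        by_cases hji : j = i
        · have hthis : ∀ u, E j u = if u = b then (1:ℝ) else if u = v then -1 else 0 := fun u => by
            rw [hEapp, if_pos hji]
          rw [Finset.sum_congr rfl (fun u _ => hthis u)]
          rw [Finset.sum_congr rfl (fun u _ => ite_pair_split hvb 1 (-1) u), Finset.sum_add_distrib]
          rw [Finset.sum_ite_eq' T b (fun _ => (1:ℝ)), Finset.sum_ite_eq' T v (fun _ => (-1:ℝ))]
          by_cases hbT : b ∈ T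
          · have hvT : v ∈ T := (minTight_subset hT hbT) (hji ▸ hvmem)
            simp [hbT, hvT]
          · by_cases hvT : v ∈ T <;> simp [hbT, hvT]
        · have hthis : ∀ u, E j u = 0 := fun u => by rw [hEapp, if_neg hji]
          simp [Finset.sum_congr rfl (fun u _ => hthis u)]
      linarith
    · -- (vi) entry bounds
      intro j q
      show |E j q + N' j q| ≤ 1
      rw [hEapp]
      by_cases hji : j = i
      · rw [if_pos hji]
        by_cases h1 : q = b
        · rw [if_pos h1, h1]
          rcases hi2 j with h | h <;> rw [h] <;> norm_num
        · rw [if_neg h1]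
          by_cases h2 : q = v
          · rw [if_pos h2, h2, hi1 v hvnot j]
            norm_num
          · rw [if_neg h2, zero_add]
            exact hi6 j q
      · rw [if_neg hji, zero_add]
        exact hi6 j q
    · -- (vii) block sums
      intro j
      have hsum : ∑ q, (E + N') j q = (∑ q, E j q) + ∑ q, N' j q := by
        rw [← Finset.sum_add_distrib]
        rfl
      rw [hsum, hi7 j, add_zero]
      by_cases hji : j = i
      · have hthis : ∀ q, E j q = if q = b then (1:ℝ) else if q = v then -1 else 0 := fun q => by
          rw [hEapp, if_pos hji]
        rw [Finset.sum_congr rfl (fun q _ => hthis q)]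
        rw [Finset.sum_congr rfl (fun q _ => ite_pair_split hvb 1 (-1) q), Finset.sum_add_distrib]
        simp [Finset.sum_ite_eq']
      · have hthis : ∀ q, E j q = 0 := fun q => by rw [hEapp, if_neg hji]
        simp [Finset.sum_congr rfl (fun q _ => hthis q)]


/-! ### Norm helpers -/

lemma vec_norm_sq (N : Vec n r) : ‖N‖^2 = ∑ j, ∑ q, (N j q)^2 := by
  rw [PiLp.norm_sq_eq_of_L2]
  apply Finset.sum_congr rfl
  intro j _
  rw [EuclideanSpace.norm_eq, Real.sq_sqrt (by positivity)]
  simp [Real.norm_eq_abs, sq_abs]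

/-! ### Augmentation step -/

lemma step_lemma {F : Fin r → Finset (Fin n) → ℝ}
    (hsub : ∀ i, Submodular (F i)) (hnorm : ∀ i, F i ∅ = 0) (hn : 0 < n)
    {z : Vec n r} (hz : z ∈ feas n r F) {t : Fin n → ℝ}
    (ht : ∀ T : Finset (Fin n), ∑ u ∈ T, t u ≤ ∑ i, F i T)
    (htt : ∑ u, t u = ∑ i, F i Finset.univ)
    (hrho : 0 < ∑ u, |agg z u - t u|) :
    ∃ (z' : Vec n r) (α : ℝ), 0 < α ∧ z' ∈ feas n r F ∧
      (∑ u, |agg z' u - t u|) ≤ (∑ u, |agg z u - t u|) - 2*α ∧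
      ‖z' - z‖ ≤ α * Real.sqrt (2*n) := by
  classical
  -- total mass identity
  have haggsum : ∑ u, agg z u = ∑ u, t u := by
    rw [htt]
    rw [show (∑ u, agg z u) = ∑ u, ∑ i, z i u from rfl, Finset.sum_comm]
    exact Finset.sum_congr rfl (fun i _ => (hz i).2)
  -- a deficit exists
  have hdef : ∃ u₀, agg z u₀ < t u₀ := by
    by_contra hcon
    push_neg at hcon
    have hzero : ∀ u ∈ Finset.univ, agg z u - t u = 0 := by
      intro u _
      have h1 : ∑ u, (agg z u - t u) = 0 := by
        rw [Finset.sum_sub_distrib, haggsum, sub_self]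
      have h2 : ∀ u ∈ Finset.univ, 0 ≤ agg z u - t u := fun u _ => sub_nonneg.2 (hcon u)
      exact (Finset.sum_eq_zero_iff_of_nonneg h2).1 h1 u (Finset.mem_univ u)
    have : (∑ u, |agg z u - t u|) = 0 := by
      apply Finset.sum_eq_zero
      intro u hu
      rw [hzero u hu, abs_zero]
    linarith
  obtain ⟨u₀, hu₀⟩ := hdef
  obtain ⟨v, hvex, l, hch, hnd, hlast⟩ := exists_excess_chain hsub hnorm hz ht hu₀
  set w : Fin n := (v :: l).getLast (List.cons_ne_nil v l) with hw
  obtain ⟨N, hN1, hN2, hN3, hN4, hN5, hN6, hN7⟩ := move_exists z l v hch hnd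
  have hwv : w ≠ v := by
    intro h
    rw [h] at hlast
    exact absurd hvex (not_lt.2 (le_of_lt hlast))
  -- slack bound
  set P : Finset (Fin r × Finset (Fin n)) :=
    (Finset.univ ×ˢ Finset.univ.powerset).filter
      (fun p => ¬ Tight (F p.1) (z p.1) p.2) with hP
  set s : ℝ := if hPne : P.Nonempty
      then (P.inf' hPne (fun p => F p.1 p.2 - ∑ u ∈ p.2, z p.1 u)) / n else 1 with hs
  have hspos : 0 < s := by
    rw [hs]
    split_ifs with hPne
    · apply div_pos _ (by exact_mod_cast hn)
      rw [Finset.lt_inf'_iff]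
      intro p hp
      have hple := (hz p.1).1 p.2
      have hpne : ∑ u ∈ p.2, z p.1 u ≠ F p.1 p.2 := (Finset.mem_filter.1 hp).2
      have : ∑ u ∈ p.2, z p.1 u < F p.1 p.2 := lt_of_le_of_ne hple hpne
      linarith
    · norm_num
  have hslack : ∀ j (T : Finset (Fin n)), ¬ Tight (F j) (z j) T →
      s * n ≤ F j T - ∑ u ∈ T, z j u := by
    intro j T hnT
    have hPne : P.Nonempty := ⟨⟨j, T⟩, by
      rw [hP, Finset.mem_filter]
      exact ⟨Finset.mem_product.2 ⟨Finset.mem_univ _, Finset.mem_powerset.2 (Finset.subset_univ _)⟩, hnT⟩⟩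
    have hmem : (⟨j, T⟩ : Fin r × Finset (Fin n)) ∈ P := by
      rw [hP, Finset.mem_filter]
      exact ⟨Finset.mem_product.2 ⟨Finset.mem_univ _, Finset.mem_powerset.2 (Finset.subset_univ _)⟩, hnT⟩
    rw [hs, dif_pos hPne]
    rw [div_mul_cancel₀]
    · exact Finset.inf'_le _ hmem
    · exact_mod_cast hn.ne'
  set α : ℝ := min (min (t w - agg z w) (agg z v - t v)) s with hα
  have hαw : α ≤ t w - agg z w := le_trans (min_le_left _ _) (min_le_left _ _)
  have hαv : α ≤ agg z v - t v := le_trans (min_le_left _ _) (min_le_right _ _)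
  have hαs : α ≤ s := min_le_right _ _
  have hαpos : 0 < α := by
    rw [hα]
    apply lt_min (lt_min _ _) hspos
    · linarith [hlast]
    · linarith [hvex]
  set z' : Vec n r := z + α • N with hz'
  have happly : ∀ j u, z' j u = z j u + α * N j u := fun j u => rfl
  have haggz' : ∀ u, agg z' u = agg z u + α * ((if u = w then 1 else 0) - (if u = v then 1 else 0)) := by
    intro u
    show (∑ j, z' j u) = _
    rw [Finset.sum_congr rfl (fun j _ => happly j u), Finset.sum_add_distrib, ← Finset.mul_sum, hN4 u]
    rfl
  refine ⟨z', α, hαpos, ?_, ?_, ?_⟩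
  · -- feasibility
    intro j
    constructor
    · intro T
      have hsumT : ∑ u ∈ T, z' j u = (∑ u ∈ T, z j u) + α * ∑ u ∈ T, N j u := by
        rw [Finset.sum_congr rfl (fun u _ => happly j u), Finset.sum_add_distrib, Finset.mul_sum]
      rw [hsumT]
      by_cases hT : Tight (F j) (z j) T
      · have h1 : ∑ u ∈ T, N j u ≤ 0 := hN5 j T hT
        have hTe : ∑ u ∈ T, z j u = F j T := hT
        have h2 : α * ∑ u ∈ T, N j u ≤ 0 := mul_nonpos_of_nonneg_of_nonpos hαpos.le h1
        linarith
      · have h1 : s * n ≤ F j T - ∑ u ∈ T, z j u := hslack j T hT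
        have h2 : ∑ u ∈ T, N j u ≤ (n : ℝ) := by
          calc ∑ u ∈ T, N j u ≤ ∑ u ∈ T, |N j u| := Finset.sum_le_sum (fun u _ => le_abs_self _)
            _ ≤ ∑ u ∈ T, 1 := Finset.sum_le_sum (fun u _ => hN6 j u)
            _ = (T.card : ℝ) := by simp
            _ ≤ (n : ℝ) := by
                have := Finset.card_le_card (Finset.subset_univ T)
                simp only [Finset.card_univ, Fintype.card_fin] at this
                exact_mod_cast this
        have h3 : α * ∑ u ∈ T, N j u ≤ α * n := by
          apply mul_le_mul_of_nonneg_left h2 hαpos.le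
        have h4 : α * (n:ℝ) ≤ s * n := by
          apply mul_le_mul_of_nonneg_right hαs (by positivity)
        linarith
    · have hsumU : ∑ u, z' j u = (∑ u, z j u) + α * ∑ u, N j u := by
        rw [Finset.sum_congr rfl (fun u _ => happly j u), Finset.sum_add_distrib, Finset.mul_sum]
      rw [hsumU, hN7 j, mul_zero, add_zero]
      exact (hz j).2
  · -- ρ decrease
    have hptwise : ∀ u, |agg z' u - t u|
        = |agg z u - t u| - α * ((if u = w then 1 else 0) + (if u = v then 1 else 0)) := by
      intro u
      rw [haggz' u]
      by_cases h1 : u = w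
      · rw [if_pos h1, if_neg (show ¬ u = v from fun hv => hwv (by rw [← h1]; exact hv)), h1]
        have hfw : |agg z w - t w| = t w - agg z w := by
          rw [abs_of_neg (by linarith [hlast])]
          ring
        have he : agg z w + α * (1 - 0) - t w = -((t w - agg z w) - α) := by ring
        rw [he, abs_neg, abs_of_nonneg (by linarith [hαw]), hfw]
        ring
      · by_cases h2 : u = v
        · rw [if_neg h1, if_pos h2, h2]
          have hfv : |agg z v - t v| = agg z v - t v := by
            rw [abs_of_pos (by linarith [hvex])]
          have he : agg z v + α * (0 - 1) - t v = (agg z v - t v) - α := by ring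
          rw [he, abs_of_nonneg (by linarith [hαv]), hfv]
          ring
        · rw [if_neg h1, if_neg h2]
          have he : agg z u + α * (0 - 0) - t u = agg z u - t u := by ring
          rw [he]
          ring
    rw [Finset.sum_congr rfl (fun u _ => hptwise u), Finset.sum_sub_distrib]
    have : ∑ u, α * ((if u = w then (1:ℝ) else 0) + (if u = v then 1 else 0)) = 2 * α := by
      rw [← Finset.mul_sum, Finset.sum_add_distrib]
      rw [Finset.sum_ite_eq' Finset.univ w (fun _ => (1:ℝ)), Finset.sum_ite_eq' Finset.univ v (fun _ => (1:ℝ))]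
      simp only [Finset.mem_univ, if_true]
      ring
    rw [this]
  · -- norm bound
    have hz'z : z' - z = α • N := by
      rw [hz']
      exact add_sub_cancel_left z (α • N)
    rw [hz'z, norm_smul, Real.norm_eq_abs, abs_of_pos hαpos]
    apply mul_le_mul_of_nonneg_left _ hαpos.le
    have hN : ‖N‖^2 ≤ 2*(n:ℝ) := by
      rw [vec_norm_sq]
      have hlen : (l.length : ℝ) ≤ (n : ℝ) := by
        have := List.Nodup.length_le_card hnd
        simp only [List.length_cons, Fintype.card_fin] at this
        have : l.length ≤ n := by omega
        exact_mod_cast this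
      calc ∑ j, ∑ q, (N j q)^2 ≤ 2 * (l.length : ℝ) := hN3
        _ ≤ 2 * (n:ℝ) := by linarith
    exact (Real.le_sqrt (norm_nonneg N) (by positivity)).2 hN


/-! ### Topology -/

lemma cont_eval (j : Fin r) (u : Fin n) : Continuous (fun z : Vec n r => z j u) :=
  ((EuclideanSpace.proj u).continuous).comp
    (PiLp.proj (𝕜 := ℝ) (p := 2) (fun _ : Fin r => EuclideanSpace ℝ (Fin n)) j).continuous

lemma cont_agg (t : Fin n → ℝ) : Continuous (fun z : Vec n r => ∑ u, |agg z u - t u|) := by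
  apply continuous_finset_sum
  intro u _
  have h1 : Continuous (fun z : Vec n r => agg z u) := by
    apply continuous_finset_sum
    intro j _
    exact cont_eval j u
  exact (h1.sub continuous_const).abs

lemma feas_isClosed (F : Fin r → Finset (Fin n) → ℝ) : IsClosed (feas n r F) := by
  have h1 : feas n r F = ⋂ j, {z : Vec n r | (∀ A : Finset (Fin n), ∑ u ∈ A, z j u ≤ F j A)
      ∧ (∑ u, z j u = F j Finset.univ)} := by
    ext z
    simp only [feas, Set.mem_setOf_eq, Set.mem_iInter]
    rfl
  rw [h1]
  apply isClosed_iInter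
  intro j
  have h2 : {z : Vec n r | (∀ A : Finset (Fin n), ∑ u ∈ A, z j u ≤ F j A)
      ∧ (∑ u, z j u = F j Finset.univ)}
      = (⋂ A : Finset (Fin n), {z : Vec n r | ∑ u ∈ A, z j u ≤ F j A})
        ∩ {z : Vec n r | ∑ u, z j u = F j Finset.univ} := by
    ext z
    simp [Set.mem_iInter]
  rw [h2]
  have hsumc : ∀ A : Finset (Fin n), Continuous (fun z : Vec n r => ∑ u ∈ A, z j u) := by
    intro A
    apply continuous_finset_sum
    intro u _
    exact cont_eval j u
  exact (isClosed_iInter (fun A => isClosed_le (hsumc A) continuous_const)).inter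
    (isClosed_eq (hsumc Finset.univ) continuous_const)

lemma feas_norm_bound (F : Fin r → Finset (Fin n) → ℝ) {z : Vec n r} (hz : z ∈ feas n r F)
    (j : Fin r) (q : Fin n) :
    |z j q| ≤ |F j {q}| + |F j Finset.univ| + |F j (Finset.univ.erase q)| := by
  have hup : z j q ≤ F j {q} := by
    have := (hz j).1 {q}
    simpa using this
  have hlow : F j Finset.univ - F j (Finset.univ.erase q) ≤ z j q := by
    have h1 : z j q + ∑ u ∈ Finset.univ.erase q, z j u = ∑ u, z j u :=
      Finset.add_sum_erase Finset.univ (fun u => z j u) (Finset.mem_univ q)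
    have h2 : ∑ u ∈ Finset.univ.erase q, z j u ≤ F j (Finset.univ.erase q) := (hz j).1 _
    have h3 : ∑ u, z j u = F j Finset.univ := (hz j).2
    linarith
  have e1 : |F j {q}| ≥ F j {q} := le_abs_self _
  have e2 : |F j Finset.univ| ≥ -(F j Finset.univ) := neg_le_abs _
  have e3 : |F j (Finset.univ.erase q)| ≥ F j (Finset.univ.erase q) := le_abs_self _
  rw [abs_le]
  constructor
  · have := abs_nonneg (F j {q})
    nlinarith [abs_nonneg (F j Finset.univ), abs_nonneg (F j (Finset.univ.erase q)),
      neg_abs_le (F j Finset.univ), le_abs_self (F j (Finset.univ.erase q))]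
  · nlinarith [abs_nonneg (F j Finset.univ), abs_nonneg (F j (Finset.univ.erase q))]

lemma feas_isCompact (F : Fin r → Finset (Fin n) → ℝ) : IsCompact (feas n r F) := by
  apply Metric.isCompact_of_isClosed_isBounded (feas_isClosed F)
  apply isBounded_iff_forall_norm_le.2
  refine ⟨Real.sqrt (∑ j, ∑ q, (|F j {q}| + |F j Finset.univ| + |F j (Finset.univ.erase q)|)^2), ?_⟩
  intro z hz
  apply (Real.le_sqrt (norm_nonneg _) (by positivity)).2
  rw [vec_norm_sq]
  apply Finset.sum_le_sum
  intro j _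
  apply Finset.sum_le_sum
  intro q _
  have h1 := feas_norm_bound F hz j q
  have h2 : (z j q)^2 = |z j q|^2 := (sq_abs _).symm
  rw [h2]
  apply pow_le_pow_left₀ (abs_nonneg _) h1

/-! ### Extraction of a closest feasible point with prescribed aggregate -/

lemma exists_good_point {F : Fin r → Finset (Fin n) → ℝ}
    (hsub : ∀ i, Submodular (F i)) (hnorm : ∀ i, F i ∅ = 0) (hn : 0 < n) (hr : 0 < r)
    {y : Vec n r} (hy : y ∈ feas n r F) {t : Fin n → ℝ}
    (ht : ∀ T : Finset (Fin n), ∑ u ∈ T, t u ≤ ∑ i, F i T)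
    (htt : ∑ u, t u = ∑ i, F i Finset.univ) :
    ∃ y' ∈ feas n r F, (∀ u, agg y' u = t u) ∧
      ‖y - y'‖ ≤ Real.sqrt ((n : ℝ) * r) * ∑ u, |agg y u - t u| := by
  classical
  set κ : ℝ := Real.sqrt ((n : ℝ) * r) with hκ
  have hκ0 : 0 ≤ κ := Real.sqrt_nonneg _
  set ρ : Vec n r → ℝ := fun z => ∑ u, |agg z u - t u| with hρ
  have hρ0 : ∀ z, 0 ≤ ρ z := fun z => Finset.sum_nonneg (fun u _ => abs_nonneg _)
  set Y : Set (Vec n r) := feas n r F ∩ {z | ‖z - y‖ ≤ κ * (ρ y - ρ z)} with hY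
  have hYcompact : IsCompact Y :=
    (feas_isCompact F).inter_right
      (isClosed_le (continuous_norm.comp (continuous_id.sub continuous_const))
        (continuous_const.mul (continuous_const.sub (cont_agg t))))
  have hYne : Y.Nonempty := by
    refine ⟨y, hy, ?_⟩
    simp
  obtain ⟨zbar, hzbarY, hmin⟩ := hYcompact.exists_isMinOn hYne (cont_agg t).continuousOn
  have hzbarfeas : zbar ∈ feas n r F := hzbarY.1
  have hzbarbud : ‖zbar - y‖ ≤ κ * (ρ y - ρ zbar) := hzbarY.2
  have hsqrt2n : Real.sqrt (2 * n) ≤ 2 * κ := by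
    have h1 : (2:ℝ) * κ = Real.sqrt (4 * ((n:ℝ) * r)) := by
      rw [show (4:ℝ) * ((n:ℝ)*r) = 2^2 * ((n:ℝ)*r) by norm_num,
        Real.sqrt_mul (by norm_num), Real.sqrt_sq (by norm_num)]
    rw [h1]
    apply Real.sqrt_le_sqrt
    have : (1:ℝ) ≤ r := by exact_mod_cast hr
    nlinarith [Nat.cast_nonneg (α := ℝ) n]
  have hρzbar : ρ zbar = 0 := by
    by_contra hne
    have hpos : 0 < ρ zbar := lt_of_le_of_ne (hρ0 zbar) (Ne.symm hne)
    obtain ⟨z', α, hα, hz'feas, hz'ρ, hz'norm⟩ :=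
      step_lemma hsub hnorm hn hzbarfeas ht htt hpos
    have hz'Y : z' ∈ Y := by
      refine ⟨hz'feas, ?_⟩
      have h1 : ‖z' - y‖ ≤ ‖z' - zbar‖ + ‖zbar - y‖ := norm_sub_le_norm_sub_add_norm_sub _ _ _
      have h2 : ‖z' - zbar‖ ≤ α * Real.sqrt (2*n) := hz'norm
      have h3 : α * Real.sqrt (2*n) ≤ α * (2 * κ) := mul_le_mul_of_nonneg_left hsqrt2n hα.le
      have h4 : κ * (ρ y - ρ zbar) + 2 * α * κ ≤ κ * (ρ y - ρ z') := by
        have : ρ z' ≤ ρ zbar - 2*α := hz'ρ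
        nlinarith
      show ‖z' - y‖ ≤ κ * (ρ y - ρ z')
      calc ‖z' - y‖ ≤ α * Real.sqrt (2*n) + ‖zbar - y‖ := by linarith
        _ ≤ α * (2*κ) + κ * (ρ y - ρ zbar) := by linarith
        _ ≤ κ * (ρ y - ρ z') := by nlinarith
    have := hmin hz'Y
    have : ρ zbar ≤ ρ z' := this
    linarith
  have haggeq : ∀ u, agg zbar u = t u := by
    intro u
    have h1 : ∀ v ∈ Finset.univ, (0:ℝ) ≤ |agg zbar v - t v| := fun v _ => abs_nonneg _
    have h2 := (Finset.sum_eq_zero_iff_of_nonneg h1).1 hρzbar u (Finset.mem_univ u)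
    have h3 : agg zbar u - t u = 0 := abs_eq_zero.1 h2
    linarith
  refine ⟨zbar, hzbarfeas, haggeq, ?_⟩
  rw [norm_sub_rev]
  calc ‖zbar - y‖ ≤ κ * (ρ y - ρ zbar) := hzbarbud
    _ = κ * ρ y := by rw [hρzbar, sub_zero]


lemma inner_nonneg_of_dir (a d : EuclideanSpace ℝ (Fin n))
    (h : ∀ s : ℝ, 0 < s → s ≤ 1 → ‖a‖^2 ≤ ‖a + s • d‖^2) : 0 ≤ (inner ℝ a d : ℝ) := by
  by_contra hneg
  push_neg at hneg
  set c : ℝ := (inner ℝ a d : ℝ) with hc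
  set D : ℝ := ‖d‖^2 with hD
  have hD0 : 0 ≤ D := by positivity
  set s : ℝ := min 1 (-c/(D+1)) with hsdef
  have hspos : 0 < s := lt_min one_pos (div_pos (neg_pos.2 hneg) (by linarith))
  have hle := h s hspos (min_le_left _ _)
  have hexp : ‖a + s • d‖^2 = ‖a‖^2 + 2*(s*c) + s^2*D := by
    rw [norm_add_sq_real, real_inner_smul_right, norm_smul, Real.norm_eq_abs,
      abs_of_pos hspos, mul_pow]
  have hsle : s*(D+1) ≤ -c := by
    have h1 : s ≤ -c/(D+1) := min_le_right _ _
    rw [le_div_iff₀ (by linarith)] at h1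
    exact h1
  rw [hexp] at hle
  nlinarith [mul_le_mul_of_nonneg_left hsle hspos.le, mul_pos hspos hspos,
    mul_neg_of_pos_of_neg hspos hneg]

lemma l1_le_sqrt_mul_l2 (Δ : EuclideanSpace ℝ (Fin n)) :
    ∑ u, |Δ u| ≤ Real.sqrt n * ‖Δ‖ := by
  set ones : EuclideanSpace ℝ (Fin n) := WithLp.toLp 2 (fun _ => 1) with hones
  set aΔ : EuclideanSpace ℝ (Fin n) := WithLp.toLp 2 (fun u => |Δ u|) with haΔ
  have h1 : (inner ℝ ones aΔ : ℝ) = ∑ u, |Δ u| := by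
    rw [PiLp.inner_apply]
    simp [RCLike.inner_apply, hones, haΔ]
  have h2 : ‖ones‖ = Real.sqrt n := by
    rw [EuclideanSpace.norm_eq]
    simp [hones]
  have h3 : ‖aΔ‖ = ‖Δ‖ := by
    rw [EuclideanSpace.norm_eq, EuclideanSpace.norm_eq]
    congr 1
    apply Finset.sum_congr rfl
    intro u _
    simp [haΔ]
  calc ∑ u, |Δ u| = (inner ℝ ones aΔ : ℝ) := h1.symm
    _ ≤ ‖ones‖ * ‖aΔ‖ := real_inner_le_norm _ _
    _ = Real.sqrt n * ‖Δ‖ := by rw [h2, h3]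

end St12

open St12

/-- For `y ∈ 𝒴`, `y*` an optimal solution of (Prox-DSM) closest to `y`,
and `g* = g(y*)` the optimal value: `g(y) ≥ g* + (1/(n²r))‖y - y*‖²`; equivalently,
`‖y - y*‖² ≤ n²r (g(y) - g*)`. -/
theorem statement12 (n r : ℕ) (hn : 1 ≤ n) (hr : 1 ≤ r)
    (F : Fin r → Finset (Fin n) → ℝ)
    (hsub : ∀ i, Submodular (F i)) (hnorm : ∀ i, F i ∅ = 0)
    (y ystar : Vec n r) (hy : y ∈ feas n r F)
    (hopt : IsOptimal n r F ystar)
    (hclosest : ∀ z : Vec n r, IsOptimal n r F z → ‖y - ystar‖ ≤ ‖y - z‖) :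
    g n r y ≥ g n r ystar + (1 / ((n : ℝ) ^ 2 * r)) * ‖y - ystar‖ ^ 2 ∧
    ‖y - ystar‖ ^ 2 ≤ (n : ℝ) ^ 2 * r * (g n r y - g n r ystar) := by
  classical
  have hn0 : 0 < n := hn
  have hr0 : 0 < r := hr
  set t : Fin n → ℝ := fun u => agg ystar u with htdef
  set A : EuclideanSpace ℝ (Fin n) := ∑ i, y i with hA
  set Astar : EuclideanSpace ℝ (Fin n) := ∑ i, ystar i with hAstar
  set Δ : EuclideanSpace ℝ (Fin n) := A - Astar with hΔ
  have hApt : ∀ u, A u = agg y u := by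
    intro u
    rw [hA, WithLp.ofLp_sum, Finset.sum_apply]
    rfl
  have hAstarpt : ∀ u, Astar u = t u := by
    intro u
    rw [hAstar, WithLp.ofLp_sum, Finset.sum_apply]
    rfl
  have hΔpt : ∀ u, Δ u = agg y u - t u := by
    intro u
    rw [hΔ]
    show A u - Astar u = _
    rw [hApt, hAstarpt]
  have ht : ∀ T : Finset (Fin n), ∑ u ∈ T, t u ≤ ∑ i, F i T := by
    intro T
    have h1 : ∑ u ∈ T, t u = ∑ i, ∑ u ∈ T, ystar i u := by
      rw [show (∑ u ∈ T, t u) = ∑ u ∈ T, ∑ i, ystar i u from rfl, Finset.sum_comm]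
    rw [h1]
    exact Finset.sum_le_sum (fun i _ => (hopt.1 i).1 T)
  have htt : ∑ u, t u = ∑ i, F i Finset.univ := by
    have h1 : ∑ u, t u = ∑ i, ∑ u, ystar i u := by
      rw [show (∑ u, t u) = ∑ u, ∑ i, ystar i u from rfl, Finset.sum_comm]
    rw [h1]
    exact Finset.sum_congr rfl (fun i _ => (hopt.1 i).2)
  obtain ⟨y', hy'feas, hy'agg, hy'norm⟩ :=
    exists_good_point hsub hnorm hn0 hr0 hy ht htt
  -- y' is optimal
  have hsum_y' : ∑ i, y' i = Astar := by
    ext u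
    have h1 : (∑ i, y' i) u = agg y' u := by
      rw [WithLp.ofLp_sum, Finset.sum_apply]
      rfl
    rw [h1, hy'agg u, ← hAstarpt]
  have hgy' : g n r y' = g n r ystar := by
    unfold g
    rw [hsum_y', hAstar]
  have hy'opt : IsOptimal n r F y' := by
    refine ⟨hy'feas, fun w hw => ?_⟩
    rw [hgy']
    exact hopt.2 w hw
  -- distance chain
  have hrho_eq : (∑ u, |agg y u - t u|) = ∑ u, |Δ u| := by
    apply Finset.sum_congr rfl
    intro u _
    rw [hΔpt]
  have hdist : ‖y - ystar‖ ≤ Real.sqrt ((n:ℝ)*r) * (Real.sqrt n * ‖Δ‖) := by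
    calc ‖y - ystar‖ ≤ ‖y - y'‖ := hclosest y' hy'opt
      _ ≤ Real.sqrt ((n:ℝ)*r) * ∑ u, |agg y u - t u| := hy'norm
      _ = Real.sqrt ((n:ℝ)*r) * ∑ u, |Δ u| := by rw [hrho_eq]
      _ ≤ Real.sqrt ((n:ℝ)*r) * (Real.sqrt n * ‖Δ‖) := by
          apply mul_le_mul_of_nonneg_left (l1_le_sqrt_mul_l2 Δ) (Real.sqrt_nonneg _)
  -- first-order optimality: 0 ≤ ⟪Astar, Δ⟫
  have hc : 0 ≤ (inner ℝ Astar Δ : ℝ) := by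
    apply inner_nonneg_of_dir
    intro s hs0 hs1
    set zt : Vec n r := ystar + s • (y - ystar) with hzt
    have hztapp : ∀ i u, zt i u = ystar i u + s * (y i u - ystar i u) := fun i u => rfl
    have hztfeas : zt ∈ feas n r F := by
      intro i
      constructor
      · intro T
        have e : ∑ u ∈ T, zt i u
            = (∑ u ∈ T, ystar i u) + s * ((∑ u ∈ T, y i u) - ∑ u ∈ T, ystar i u) := by
          rw [Finset.sum_congr rfl (fun u _ => hztapp i u), Finset.sum_add_distrib,
            ← Finset.mul_sum, Finset.sum_sub_distrib]
        rw [e]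
        have h1 := (hy i).1 T
        have h2 := (hopt.1 i).1 T
        nlinarith
      · have e : ∑ u, zt i u
            = (∑ u, ystar i u) + s * ((∑ u, y i u) - ∑ u, ystar i u) := by
          rw [Finset.sum_congr rfl (fun u _ => hztapp i u), Finset.sum_add_distrib,
            ← Finset.mul_sum, Finset.sum_sub_distrib]
        rw [e, (hy i).2, (hopt.1 i).2, sub_self, mul_zero, add_zero]
    have hsum_zt : ∑ i, zt i = Astar + s • Δ := by
      ext u
      have h1 : (∑ i, zt i) u = ∑ i, zt i u := by
        rw [WithLp.ofLp_sum, Finset.sum_apply]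
      have h2 : (Astar + s • Δ) u = Astar u + s * Δ u := rfl
      rw [h1, h2, Finset.sum_congr rfl (fun i _ => hztapp i u), Finset.sum_add_distrib,
        ← Finset.mul_sum, Finset.sum_sub_distrib]
      have h3 : ∑ i, ystar i u = Astar u := (hAstarpt u).symm
      have h4 : ∑ i, y i u = A u := (hApt u).symm
      rw [h3, h4]
      have h5 : Δ u = A u - Astar u := rfl
      rw [h5]
    have hineq := hopt.2 zt hztfeas
    have hgzt : g n r zt = ‖Astar + s • Δ‖^2 := by
      unfold g
      rw [hsum_zt]
    have hgstar : g n r ystar = ‖Astar‖^2 := by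
      unfold g
      rw [hAstar]
    rw [hgzt, hgstar] at hineq
    exact hineq
  -- second-order expansion of g y
  have hgy : g n r y - g n r ystar ≥ ‖Δ‖^2 := by
    have hAdec : A = Astar + Δ := by
      rw [hΔ]
      abel
    have h1 : g n r y = ‖Astar + Δ‖^2 := by
      unfold g
      rw [← hA, hAdec]
    have h2 : g n r ystar = ‖Astar‖^2 := by
      unfold g
      rw [hAstar]
    rw [h1, h2, norm_add_sq_real]
    linarith
  -- squaring the distance bound
  have hp : (0:ℝ) < (n:ℝ)^2 * r := by
    have h1 : (0:ℝ) < (n:ℝ) := by exact_mod_cast hn0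
    have h2 : (0:ℝ) < (r:ℝ) := by exact_mod_cast hr0
    positivity
  have hXsq : ‖y - ystar‖^2 ≤ (n:ℝ)^2 * r * ‖Δ‖^2 := by
    have h1 := pow_le_pow_left₀ (norm_nonneg (y - ystar)) hdist 2
    have h2 : (Real.sqrt ((n:ℝ)*r) * (Real.sqrt n * ‖Δ‖))^2 = (n:ℝ)^2 * r * ‖Δ‖^2 := by
      rw [mul_pow, mul_pow, Real.sq_sqrt (by positivity), Real.sq_sqrt (by positivity)]
      ring
    rw [h2] at h1
    exact h1
  have hsecond : ‖y - ystar‖^2 ≤ (n:ℝ)^2 * r * (g n r y - g n r ystar) := by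
    calc ‖y - ystar‖^2 ≤ (n:ℝ)^2 * r * ‖Δ‖^2 := hXsq
      _ ≤ (n:ℝ)^2 * r * (g n r y - g n r ystar) := by
          apply mul_le_mul_of_nonneg_left (by linarith) hp.le
  constructor
  · have h1 : (1/((n:ℝ)^2*r)) * ‖y - ystar‖^2 ≤ (1/((n:ℝ)^2*r)) * ((n:ℝ)^2*r*(g n r y - g n r ystar)) :=
      mul_le_mul_of_nonneg_left hsecond (by positivity)
    have h2 : (1/((n:ℝ)^2*r)) * ((n:ℝ)^2*r*(g n r y - g n r ystar)) = g n r y - g n r ystar := by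
      field_simp
    rw [h2] at h1
    linarith
  · exact hsecond
end
end

section
/- Let 𝒫 = ∏_{i=1}^r B(F_i), 𝒬 = {y ∈ ℝ^{nr} : Sy = 0}, let v be the projection of the origin onto the closed convex set 𝒬 − 𝒫, let 𝒬' = 𝒬 − v, and let E = {p ∈ 𝒫 : d(p, 𝒬) = d(𝒫, 𝒬)}. Then for any y ∈ ℝ^{nr} and any p ∈ E, d(y, 𝒬') = ‖S(y − p)‖. -/
open scoped RealInnerProductSpace Pointwise

noncomputable section

namespace St16aux

variable {n r : ℕ}

/-- The adjoint of `S`: every block equals `(1/√r) x`. -/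
def As (n r : ℕ) (x : EuclideanSpace ℝ (Fin n)) : Vec n r := WithLp.toLp 2 (fun _ => (Real.sqrt r)⁻¹ • x)

lemma Smap_add (y z : Vec n r) : Smap n r (y + z) = Smap n r y + Smap n r z := by
  simp [Smap, Finset.sum_add_distrib, smul_add]

lemma Smap_neg (y : Vec n r) : Smap n r (-y) = -Smap n r y := by
  simp [Smap]

lemma Smap_sub (y z : Vec n r) : Smap n r (y - z) = Smap n r y - Smap n r z := by
  simp [Smap, Finset.sum_sub_distrib, smul_sub]

lemma Smap_smul (a : ℝ) (y : Vec n r) : Smap n r (a • y) = a • Smap n r y := by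
  simp [Smap, Finset.smul_sum, smul_comm a]

lemma Smap_zero : Smap n r 0 = 0 := by simp [Smap]

lemma inner_adj (z : Vec n r) (x : EuclideanSpace ℝ (Fin n)) :
    ⟪Smap n r z, x⟫ = ⟪z, As n r x⟫ := by
  calc ⟪Smap n r z, x⟫ = (Real.sqrt r)⁻¹ * ⟪∑ i, z i, x⟫ := real_inner_smul_left _ _ _
    _ = (Real.sqrt r)⁻¹ * ∑ i, ⟪z i, x⟫ := by rw [sum_inner]
    _ = ∑ i, ⟪z i, As n r x i⟫ := by
        simp only [As, PiLp.toLp_apply, real_inner_smul_right, Finset.mul_sum]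
    _ = ⟪z, As n r x⟫ := (PiLp.inner_apply z (As n r x)).symm

lemma Smap_As (hr : 1 ≤ r) (x : EuclideanSpace ℝ (Fin n)) :
    Smap n r (As n r x) = x := by
  have h0 : Real.sqrt r ≠ 0 := by
    have : (0:ℝ) < r := by exact_mod_cast hr
    positivity
  simp only [Smap, As, PiLp.toLp_apply, Finset.sum_const, Finset.card_univ, Fintype.card_fin,
    ← Nat.cast_smul_eq_nsmul ℝ, smul_smul]
  have : (Real.sqrt r)⁻¹ * ((r : ℝ) * (Real.sqrt r)⁻¹) = 1 := by
    rw [← Real.mul_self_sqrt (show (0:ℝ) ≤ r by positivity)]; field_simp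
    rw [Real.sqrt_sq (Real.sqrt_nonneg _)]
  rw [this, one_smul]

lemma norm_As (hr : 1 ≤ r) (x : EuclideanSpace ℝ (Fin n)) :
    ‖As n r x‖ = ‖x‖ := by
  have hs : Real.sqrt r * Real.sqrt r = r := Real.mul_self_sqrt (by positivity)
  have hr0 : (r : ℝ) ≠ 0 := by positivity
  have h1 : ⟪As n r x, As n r x⟫ = ⟪x, x⟫ := by
    rw [PiLp.inner_apply]
    simp only [As, PiLp.toLp_apply, real_inner_smul_left, real_inner_smul_right, Finset.sum_const,
      Finset.card_univ, Fintype.card_fin, nsmul_eq_mul]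
    rw [← hs]
    field_simp
    rw [Real.sqrt_sq (Real.sqrt_nonneg _)]
  have h2 := real_inner_self_eq_norm_sq (As n r x)
  have h3 := real_inner_self_eq_norm_sq x
  rw [h1, h3] at h2
  nlinarith [norm_nonneg (As n r x), norm_nonneg x]

lemma norm_Smap_le (hr : 1 ≤ r) (z : Vec n r) : ‖Smap n r z‖ ≤ ‖z‖ := by
  have h := inner_adj z (Smap n r z)
  have hcs := real_inner_le_norm z (As n r (Smap n r z))
  rw [norm_As hr] at hcs
  have h2 : ‖Smap n r z‖ ^ 2 ≤ ‖z‖ * ‖Smap n r z‖ := by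
    rw [← real_inner_self_eq_norm_sq, h]; exact hcs
  rcases eq_or_lt_of_le (norm_nonneg (Smap n r z)) with h0 | h0
  · rw [← h0]; exact norm_nonneg z
  · nlinarith

/-- Distance from a point to a level set of `S`. -/
lemma infDist_level (hr : 1 ≤ r) (y : Vec n r) (c : EuclideanSpace ℝ (Fin n)) :
    Metric.infDist y {z : Vec n r | Smap n r z = c} = ‖Smap n r y - c‖ := by
  set q : Vec n r := y - As n r (Smap n r y - c) with hqdef
  have hq : q ∈ {z : Vec n r | Smap n r z = c} := by
    simp only [Set.mem_setOf_eq, hqdef, Smap_sub, Smap_As hr]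
    abel
  have hd : dist y q = ‖Smap n r y - c‖ := by
    rw [dist_eq_norm, hqdef]
    simp only [sub_sub_cancel]
    exact norm_As hr _
  apply le_antisymm
  · rw [← hd]; exact Metric.infDist_le_dist_of_mem hq
  · by_contra hlt
    push_neg at hlt
    obtain ⟨z, hz, hdz⟩ := (Metric.infDist_lt_iff ⟨q, hq⟩).1 hlt
    have : ‖Smap n r y - c‖ ≤ dist y z := by
      rw [dist_eq_norm]
      calc ‖Smap n r y - c‖ = ‖Smap n r (y - z)‖ := by rw [Smap_sub, hz]
        _ ≤ ‖y - z‖ := norm_Smap_le hr _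
    linarith

lemma convex_basePolytope (n : ℕ) (F : Finset (Fin n) → ℝ) :
    Convex ℝ (basePolytope n F) := by
  intro x hx y hy a b ha hb hab
  have happ : ∀ j, (a • x + b • y) j = a * x j + b * y j := fun j => rfl
  constructor
  · intro A
    have h1 : ∑ j ∈ A, (a • x + b • y) j = a * ∑ j ∈ A, x j + b * ∑ j ∈ A, y j := by
      simp only [happ, Finset.sum_add_distrib, Finset.mul_sum]
    rw [h1]
    have h2 : a * F A + b * F A = F A := by rw [← add_mul, hab, one_mul]
    linarith [mul_le_mul_of_nonneg_left (hx.1 A) ha, mul_le_mul_of_nonneg_left (hy.1 A) hb]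
  · have h1 : ∑ j, (a • x + b • y) j = a * ∑ j, x j + b * ∑ j, y j := by
      simp only [happ, Finset.sum_add_distrib, Finset.mul_sum]
    rw [h1, hx.2, hy.2, ← add_mul, hab, one_mul]

lemma convex_feas (n r : ℕ) (F : Fin r → Finset (Fin n) → ℝ) :
    Convex ℝ (feas n r F) := by
  intro x hx y hy a b ha hb hab i
  have : (a • x + b • y) i = a • x i + b • y i := rfl
  rw [feas] at *
  show (a • x + b • y) i ∈ basePolytope n (F i)
  rw [this]
  exact convex_basePolytope n (F i) (hx i) (hy i) ha hb hab

lemma convex_ker (n r : ℕ) : Convex ℝ {y : Vec n r | Smap n r y = 0} := by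
  intro x hx y hy a b _ _ _
  simp only [Set.mem_setOf_eq] at *
  rw [Smap_add, Smap_smul, Smap_smul, hx, hy, smul_zero, smul_zero, add_zero]

end St16aux

/-- With `𝒫 = ∏ᵢ B(Fᵢ)`, `𝒬 = {y | Sy = 0}`, `v` the minimum-norm point
of `𝒬 - 𝒫`, `𝒬' = 𝒬 - v` and `E = {p ∈ 𝒫 | d(p, 𝒬) = d(𝒫, 𝒬)}`: for any `y ∈ ℝ^{nr}`
and any `p ∈ E`, `d(y, 𝒬') = ‖S(y - p)‖`. -/
theorem statement16 (n r : ℕ) (hn : 1 ≤ n) (hr : 1 ≤ r)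
    (F : Fin r → Finset (Fin n) → ℝ)
    (hsub : ∀ i, Submodular (F i)) (hnorm : ∀ i, F i ∅ = 0)
    (P : Set (Vec n r)) (hP : P = feas n r F)
    (Q : Set (Vec n r)) (hQ : Q = {y : Vec n r | Smap n r y = 0})
    (v : Vec n r) (hv : v ∈ Q - P) (hvmin : ∀ w ∈ Q - P, ‖v‖ ≤ ‖w‖)
    (Q' : Set (Vec n r)) (hQ' : Q' = (fun y => y - v) '' Q)
    (E : Set (Vec n r)) (hE : E = {p ∈ P | Metric.infDist p Q = setDist P Q}) :
    ∀ y : Vec n r, ∀ p ∈ E, Metric.infDist y Q' = ‖Smap n r (y - p)‖ := by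
  classical
  intro y p hp
  subst hP hQ hQ' hE
  obtain ⟨hpP, hpd⟩ := hp
  set QS : Set (Vec n r) := {z : Vec n r | Smap n r z = 0} with hQS
  obtain ⟨q0, hq0, p0, hp0, hvq⟩ := Set.mem_sub.1 hv
  have hq0' : Smap n r q0 = 0 := hq0
  -- key: for any p' ∈ P, ‖v‖ ≤ ‖S p'‖
  have key : ∀ p' ∈ feas n r F, ‖v‖ ≤ ‖Smap n r p'‖ := by
    intro p' hp'
    have hmem : p' - St16aux.As n r (Smap n r p') ∈ QS := by
      simp only [hQS, Set.mem_setOf_eq, St16aux.Smap_sub, St16aux.Smap_As hr, sub_self]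
    have hsub : (p' - St16aux.As n r (Smap n r p')) - p' ∈ QS - feas n r F :=
      Set.sub_mem_sub hmem hp'
    calc ‖v‖ ≤ ‖(p' - St16aux.As n r (Smap n r p')) - p'‖ := hvmin _ hsub
      _ = ‖St16aux.As n r (Smap n r p')‖ := by
          rw [show (p' - St16aux.As n r (Smap n r p')) - p'
              = -(St16aux.As n r (Smap n r p')) by abel, norm_neg]
      _ = ‖Smap n r p'‖ := St16aux.norm_As hr _
  -- setDist P Q = ‖v‖
  have hset : setDist (feas n r F) QS = ‖v‖ := by
    apply le_antisymm
    · apply csInf_le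
      · exact ⟨0, by rintro _ ⟨⟨a, b⟩, _, rfl⟩; exact dist_nonneg⟩
      · refine ⟨(p0, q0), ⟨hp0, hq0⟩, ?_⟩
        show dist p0 q0 = ‖v‖
        rw [dist_eq_norm, ← hvq, norm_sub_rev]
    · apply le_csInf
      · exact ⟨_, ⟨(p0, q0), ⟨hp0, hq0⟩, rfl⟩⟩
      · rintro b ⟨⟨p', q'⟩, ⟨hp', hq'⟩, rfl⟩
        have hq'0 : Smap n r q' = 0 := hq'
        calc ‖v‖ ≤ ‖Smap n r p'‖ := key p' hp'
          _ = ‖Smap n r (p' - q')‖ := by rw [St16aux.Smap_sub, hq'0, sub_zero]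
          _ ≤ ‖p' - q'‖ := St16aux.norm_Smap_le hr _
          _ = dist p' q' := (dist_eq_norm _ _).symm
  -- ‖S p‖ = ‖v‖
  have hdl := St16aux.infDist_level hr p (0 : EuclideanSpace ℝ (Fin n))
  rw [sub_zero] at hdl
  have hSp : ‖Smap n r p‖ = ‖v‖ := by rw [← hdl, hpd, hset]
  -- w := -(As (S p)) is also a min-norm point of Q - P
  set w : Vec n r := -(St16aux.As n r (Smap n r p)) with hwdef
  have hwmem : w ∈ QS - feas n r F := by
    have hmem : p - St16aux.As n r (Smap n r p) ∈ QS := by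
      simp only [hQS, Set.mem_setOf_eq, St16aux.Smap_sub, St16aux.Smap_As hr, sub_self]
    have := Set.sub_mem_sub hmem hpP
    have heq : (p - St16aux.As n r (Smap n r p)) - p = w := by rw [hwdef]; abel
    rwa [heq] at this
  have hwn : ‖w‖ = ‖v‖ := by
    rw [hwdef, norm_neg, St16aux.norm_As hr, hSp]
  -- convexity and uniqueness of min-norm point
  have hconv : Convex ℝ (QS - feas n r F) :=
    (St16aux.convex_ker n r).sub (St16aux.convex_feas n r F)
  have hmmem : (1/2 : ℝ) • v + (1/2 : ℝ) • w ∈ QS - feas n r F :=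
    hconv hv hwmem (by norm_num) (by norm_num) (by norm_num)
  have h5 := hvmin _ hmmem
  have h6 : ‖(1/2 : ℝ) • v + (1/2 : ℝ) • w‖ = (1/2) * ‖v + w‖ := by
    rw [← smul_add, norm_smul]
    simp
  rw [h6] at h5
  have hpar := parallelogram_law_with_norm ℝ v w
  have hvw0 : ‖v - w‖ = 0 := by
    nlinarith [norm_nonneg (v - w), norm_nonneg (v + w), norm_nonneg v]
  have hvw : v = w := sub_eq_zero.1 (norm_eq_zero.1 hvw0)
  have hSv : Smap n r v = -Smap n r p := by
    rw [hvw, hwdef, St16aux.Smap_neg, St16aux.Smap_As hr]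
  -- Q' = {z | S z = S p}
  have hQ'eq : ((fun y => y - v) '' QS) = {z : Vec n r | Smap n r z = Smap n r p} := by
    ext z
    constructor
    · rintro ⟨q', hq', rfl⟩
      have hq'0 : Smap n r q' = 0 := hq'
      simp only [Set.mem_setOf_eq, St16aux.Smap_sub, hq'0, hSv, zero_sub, neg_neg]
    · intro hz
      have hz' : Smap n r z = Smap n r p := hz
      refine ⟨z + v, ?_, add_sub_cancel_right z v⟩
      have : Smap n r (z + v) = 0 := by
        rw [St16aux.Smap_add, hz', hSv]; simp
      exact this
  rw [hQ'eq, St16aux.infDist_level hr y (Smap n r p), ← St16aux.Smap_sub]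
end
end
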